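/- Suppose ψ is a unit vector, {a_i}, {f_j} orthonormal bases of ℂ^d, and all KD quasiprobabilities q_{ij} = ⟨f_j|a_i⟩⟨a_i|ψ⟩⟨ψ|f_j⟩ are nonnegative reals. Let n_∥ (resp. n̄_∥) be the number of a_i parallel to some f_j and nonorthogonal (resp. orthogonal) to ψ, and N_A, N_F the numbers of a_i, f_j nonorthogonal to ψ. Then 2N_A + 2N_F ≤ 3d + n_∥ − 3 n̄_∥. -/

import Mathlib

open scoped InnerProductSpace ComplexOrder

local notation "⟪" x ", " y "⟫" => @inner ℂ _ _ x y

open Finset Complex ComplexConjugate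

namespace KD

attribute [local instance] Classical.propDecidable

noncomputable section

variable {d : ℕ} (V : Fin d → Fin d → ℂ) (a b : Fin d → ℝ)

structure Hyp : Prop where
  ha : ∀ i, 0 ≤ a i
  hb : ∀ j, 0 ≤ b j
  hcol : ∀ i i', ∑ j, conj (V j i) * V j i' = if i = i' then 1 else 0
  hrow : ∀ j j', ∑ i, V j i * conj (V j' i) = if j = j' then 1 else 0
  h1 : ∀ j, ∑ i, V j i * (a i : ℂ) = (b j : ℂ)
  h2 : ∀ i, ∑ j, conj (V j i) * (b j : ℂ) = (a i : ℂ)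
  h4 : ∀ i j, a i ≠ 0 → b j ≠ 0 → 0 ≤ V j i

variable {V a b}

theorem colmass (h : Hyp V a b) (i : Fin d) : ∑ j, normSq (V j i) = 1 := by
  have h0 := h.hcol i i
  rw [if_pos rfl] at h0
  have h1 : ((∑ j, normSq (V j i) : ℝ) : ℂ) = 1 := by
    push_cast
    rw [← h0]
    exact Finset.sum_congr rfl fun j _ => (Complex.normSq_eq_conj_mul_self).symm ▸ rfl
  exact_mod_cast h1

theorem rowmass (h : Hyp V a b) (j : Fin d) : ∑ i, normSq (V j i) = 1 := by
  have h0 := h.hrow j j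
  rw [if_pos rfl] at h0
  have h1 : ((∑ i, normSq (V j i) : ℝ) : ℂ) = 1 := by
    push_cast
    rw [← h0]
    exact Finset.sum_congr rfl fun i _ => by rw [Complex.mul_conj]
  exact_mod_cast h1

theorem blockIm (h : Hyp V a b) {i j : Fin d} (hi : a i ≠ 0) (hj : b j ≠ 0) :
    (V j i).im = 0 := by
  have := h.h4 i j hi hj
  rw [Complex.le_def] at this
  exact this.2.symm

theorem blockRe (h : Hyp V a b) {i j : Fin d} (hi : a i ≠ 0) (hj : b j ≠ 0) :
    0 ≤ (V j i).re := by
  have := h.h4 i j hi hj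
  rw [Complex.le_def] at this
  simpa using this.1

theorem blockConj (h : Hyp V a b) {i j : Fin d} (hi : a i ≠ 0) (hj : b j ≠ 0) :
    conj (V j i) = V j i := by
  rw [Complex.conj_eq_iff_im]
  exact blockIm h hi hj

theorem blockEqRe (h : Hyp V a b) {i j : Fin d} (hi : a i ≠ 0) (hj : b j ≠ 0) :
    V j i = ((V j i).re : ℂ) := by
  rw [Complex.ext_iff]
  exact ⟨by simp, by simp [blockIm h hi hj]⟩

theorem blockRePos (h : Hyp V a b) {i j : Fin d} (hi : a i ≠ 0) (hj : b j ≠ 0)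
    (hne : V j i ≠ 0) : 0 < (V j i).re := by
  rcases lt_or_eq_of_le (blockRe h hi hj) with h' | h'
  · exact h'
  · exfalso; apply hne
    rw [Complex.ext_iff]
    exact ⟨h'.symm, blockIm h hi hj⟩

/-- if an entry has modulus one, the rest of its row vanishes -/
theorem uni_row (h : Hyp V a b) {i j : Fin d} (hu : normSq (V j i) = 1)
    {i' : Fin d} (hne : i' ≠ i) : V j i' = 0 := by
  have hm := rowmass h j
  have hsplit : ∑ k ∈ univ.erase i, normSq (V j k) = 0 := by
    have h3 := Finset.add_sum_erase univ (fun k => normSq (V j k)) (mem_univ i)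
    linarith
  have := (Finset.sum_eq_zero_iff_of_nonneg (fun k _ => Complex.normSq_nonneg _)).mp hsplit
  have h0 := this i' (Finset.mem_erase.mpr ⟨hne, mem_univ _⟩)
  exact Complex.normSq_eq_zero.mp h0

theorem uni_col (h : Hyp V a b) {i j : Fin d} (hu : normSq (V j i) = 1)
    {j' : Fin d} (hne : j' ≠ j) : V j' i = 0 := by
  have hm := colmass h i
  have hsplit : ∑ k ∈ univ.erase j, normSq (V k i) = 0 := by
    have h3 := Finset.add_sum_erase univ (fun k => normSq (V k i)) (mem_univ j)
    linarith
  have := (Finset.sum_eq_zero_iff_of_nonneg (fun k _ => Complex.normSq_nonneg _)).mp hsplit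
  have h0 := this j' (Finset.mem_erase.mpr ⟨hne, mem_univ _⟩)
  exact Complex.normSq_eq_zero.mp h0

-- PART 2 (appended before `end` of section in core.lean)

variable (V a b)

def SAf : Finset (Fin d) := univ.filter (fun i => a i ≠ 0)
def SFf : Finset (Fin d) := univ.filter (fun j => b j ≠ 0)
def Par (i : Fin d) : Prop := ∃ j, normSq (V j i) = 1
def matchedf : Finset (Fin d) :=
  univ.filter (fun j => ∃ i, normSq (V j i) = 1 ∧ a i = 0)
def OutR : Finset (Fin d) :=
  univ.filter (fun j => b j = 0 ∧ ¬(∃ i, normSq (V j i) = 1 ∧ a i = 0))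

variable {V a b}

theorem mem_SAf {i : Fin d} : i ∈ SAf a ↔ a i ≠ 0 := by simp [SAf]
theorem mem_SFf {j : Fin d} : j ∈ SFf b ↔ b j ≠ 0 := by simp [SFf]

theorem r1 (h : Hyp V a b) {j : Fin d} (hj : b j ≠ 0) :
    b j = ∑ i ∈ SAf a, (V j i).re * a i := by
  have h0 := h.h1 j
  have e1 : ∑ i, V j i * (a i : ℂ) = ∑ i ∈ SAf a, V j i * (a i : ℂ) := by
    refine (Finset.sum_subset (Finset.subset_univ _) ?_).symm
    intro i _ hi
    have : a i = 0 := by simpa [SAf] using hi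
    simp [this]
  have e2 : ∑ i ∈ SAf a, V j i * (a i : ℂ) = ((∑ i ∈ SAf a, (V j i).re * a i : ℝ) : ℂ) := by
    push_cast
    refine Finset.sum_congr rfl (fun i hi => ?_)
    have hia : a i ≠ 0 := mem_SAf.mp hi
    rw [← blockEqRe h hia hj]
  have e3 : (b j : ℂ) = ((∑ i ∈ SAf a, (V j i).re * a i : ℝ) : ℂ) := by rw [← h0, e1, e2]
  exact_mod_cast e3

theorem r2 (h : Hyp V a b) {i : Fin d} (hi : a i ≠ 0) :
    a i = ∑ j ∈ SFf b, (V j i).re * b j := by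
  have h0 := h.h2 i
  have e1 : ∑ j, conj (V j i) * (b j : ℂ) = ∑ j ∈ SFf b, conj (V j i) * (b j : ℂ) := by
    refine (Finset.sum_subset (Finset.subset_univ _) ?_).symm
    intro j _ hj
    have : b j = 0 := by simpa [SFf] using hj
    simp [this]
  have e2 : ∑ j ∈ SFf b, conj (V j i) * (b j : ℂ)
      = ((∑ j ∈ SFf b, (V j i).re * b j : ℝ) : ℂ) := by
    push_cast
    refine Finset.sum_congr rfl (fun j hj => ?_)
    have hjb : b j ≠ 0 := mem_SFf.mp hj
    rw [blockConj h hi hjb, ← blockEqRe h hi hjb]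
  have e3 : (a i : ℂ) = ((∑ j ∈ SFf b, (V j i).re * b j : ℝ) : ℂ) := by rw [← h0, e1, e2]
  exact_mod_cast e3

theorem exists_nbA (h : Hyp V a b) {i : Fin d} (hi : a i ≠ 0) :
    ∃ j, b j ≠ 0 ∧ V j i ≠ 0 := by
  by_contra hc
  push_neg at hc
  have h0 := h.h2 i
  have hz : ∑ j, conj (V j i) * (b j : ℂ) = 0 := Finset.sum_eq_zero (fun j _ => by
    by_cases hbj : b j = 0
    · simp [hbj]
    · simp [hc j hbj])
  rw [hz] at h0
  exact hi (by exact_mod_cast h0.symm)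

theorem exists_nbF (h : Hyp V a b) {j : Fin d} (hj : b j ≠ 0) :
    ∃ i, a i ≠ 0 ∧ V j i ≠ 0 := by
  by_contra hc
  push_neg at hc
  have h0 := h.h1 j
  have hz : ∑ i, V j i * (a i : ℂ) = 0 := Finset.sum_eq_zero (fun i _ => by
    by_cases hai : a i = 0
    · simp [hai]
    · simp [hc i hai])
  rw [hz] at h0
  exact hj (by exact_mod_cast h0.symm)

variable (V a b)

def SAt := {i : Fin d // a i ≠ 0}

instance : Fintype (SAt a) := Subtype.fintype _

def relE (x y : SAt a) : Prop := ∃ j, b j ≠ 0 ∧ V j x.1 ≠ 0 ∧ V j y.1 ≠ 0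

theorem relE_symm : Symmetric (relE V a b) := by
  rintro x y ⟨j, hj, hx, hy⟩
  exact ⟨j, hj, hy, hx⟩

def st : Setoid (SAt a) :=
  ⟨Relation.ReflTransGen (relE V a b),
   ⟨fun _ => Relation.ReflTransGen.refl,
    fun hxy => by
      haveI : Std.Symm (relE V a b) := ⟨fun x y h => relE_symm V a b h⟩
      exact Std.Symm.symm _ _ hxy,
    fun hxy hyz => hxy.trans hyz⟩⟩

def Qt := Quotient (st V a b)

instance : Fintype (Qt V a b) := Quotient.fintype _

def qk (x : SAt a) : Qt V a b := Quotient.mk (st V a b) x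

theorem qk_eq_iff {x y : SAt a} :
    qk V a b x = qk V a b y ↔ Relation.ReflTransGen (relE V a b) x y :=
  ⟨fun h => Quotient.exact h, fun h => Quotient.sound h⟩

variable {V a b}

/-- the class map on the A side; `x₀` is a junk default -/
noncomputable def fA (V : Fin d → Fin d → ℂ) (b : Fin d → ℝ) (x₀ : SAt a) (i : Fin d) : Qt V a b :=
  if hi : a i ≠ 0 then qk V a b ⟨i, hi⟩ else qk V a b x₀

theorem fA_eq (x₀ : SAt a) {i : Fin d} (hi : a i ≠ 0) :
    fA V b x₀ i = qk V a b ⟨i, hi⟩ := dif_pos hi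

/-- the class map on the F side -/
noncomputable def fF (h : Hyp V a b) (x₀ : SAt a) (j : Fin d) : Qt V a b :=
  if hj : b j ≠ 0 then
    qk V a b ⟨(exists_nbF h hj).choose, (exists_nbF h hj).choose_spec.1⟩
  else qk V a b x₀

theorem fF_eq (h : Hyp V a b) (x₀ : SAt a) {j : Fin d} (hj : b j ≠ 0)
    {i : Fin d} (hi : a i ≠ 0) (hV : V j i ≠ 0) :
    fF h x₀ j = qk V a b ⟨i, hi⟩ := by
  rw [fF, dif_pos hj]
  apply (qk_eq_iff V a b).mpr
  exact Relation.ReflTransGen.single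
    ⟨j, hj, (exists_nbF h hj).choose_spec.2, hV⟩

noncomputable def CA (V : Fin d → Fin d → ℂ) (b : Fin d → ℝ) (x₀ : SAt a) (t : Qt V a b) : Finset (Fin d) :=
  (SAf a).filter (fun i => fA V b x₀ i = t)

noncomputable def CF (h : Hyp V a b) (x₀ : SAt a) (t : Qt V a b) : Finset (Fin d) :=
  (SFf b).filter (fun j => fF h x₀ j = t)

theorem mem_CA {x₀ : SAt a} {t : Qt V a b} {i : Fin d} :
    i ∈ CA V b x₀ t ↔ a i ≠ 0 ∧ fA V b x₀ i = t := by simp [CA, mem_SAf, Finset.mem_filter, SAf]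

theorem mem_CF {h : Hyp V a b} {x₀ : SAt a} {t : Qt V a b} {j : Fin d} :
    j ∈ CF h x₀ t ↔ b j ≠ 0 ∧ fF h x₀ j = t := by simp [CF, Finset.mem_filter, SFf]

theorem partitionA (x₀ : SAt a) :
    (SAf a).card = ∑ t : Qt V a b, (CA V b x₀ t).card :=
  Finset.card_eq_sum_card_fiberwise (fun i _ => Finset.mem_univ _)

theorem partitionF (h : Hyp V a b) (x₀ : SAt a) :
    (SFf b).card = ∑ t : Qt V a b, (CF h x₀ t).card :=
  Finset.card_eq_sum_card_fiberwise (fun j _ => Finset.mem_univ _)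

theorem CA_nonempty (x₀ : SAt a) (t : Qt V a b) : (CA V b x₀ t).Nonempty := by
  obtain ⟨x, hx⟩ := Quotient.exists_rep t
  exact ⟨x.1, mem_CA.mpr ⟨x.2, by rw [fA_eq x₀ x.2]; rw [← hx]; rfl⟩⟩

theorem CF_nonempty (h : Hyp V a b) (x₀ : SAt a) (t : Qt V a b) :
    (CF h x₀ t).Nonempty := by
  obtain ⟨x, hx⟩ := Quotient.exists_rep t
  obtain ⟨j, hj, hV⟩ := exists_nbA h x.2
  refine ⟨j, mem_CF.mpr ⟨hj, ?_⟩⟩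
  rw [fF_eq h x₀ hj x.2 hV, ← hx]
  rfl

/-- per-class identity, A side -/
theorem rA (h : Hyp V a b) (x₀ : SAt a) {i : Fin d} (hi : a i ≠ 0) :
    a i = ∑ j ∈ CF h x₀ (fA V b x₀ i), (V j i).re * b j := by
  rw [r2 h hi]
  refine (Finset.sum_subset ?_ ?_).symm
  · intro j hj; exact mem_SFf.mpr (mem_CF.mp hj).1
  · intro j hj hnj
    have hjb : b j ≠ 0 := mem_SFf.mp hj
    by_cases hV : V j i = 0
    · simp [hV]
    · exfalso; apply hnj
      exact mem_CF.mpr ⟨hjb, by rw [fF_eq h x₀ hjb hi hV, fA_eq x₀ hi]⟩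

/-- per-class identity, F side -/
theorem rF (h : Hyp V a b) (x₀ : SAt a) {j : Fin d} (hj : b j ≠ 0) :
    b j = ∑ i ∈ CA V b x₀ (fF h x₀ j), (V j i).re * a i := by
  rw [r1 h hj]
  refine (Finset.sum_subset ?_ ?_).symm
  · intro i hi; exact mem_SAf.mpr (mem_CA.mp hi).1
  · intro i hi hni
    have hia : a i ≠ 0 := mem_SAf.mp hi
    by_cases hV : V j i = 0
    · simp [hV]
    · exfalso; apply hni
      exact mem_CA.mpr ⟨hia, by rw [fA_eq x₀ hia, ← fF_eq h x₀ hj hia hV]⟩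

/-- the class of a parallel vector is a singleton -/
theorem par_reach (h : Hyp V a b) {i : Fin d} (hi : a i ≠ 0) (hp : Par V i)
    {y : SAt a} (hy : Relation.ReflTransGen (relE V a b) ⟨i, hi⟩ y) :
    y = ⟨i, hi⟩ := by
  obtain ⟨jstar, hjs⟩ := hp
  induction hy with
  | refl => rfl
  | @tail x y' hxy hrel ih =>
      obtain ⟨j, hj, hx, hy'⟩ := hrel
      rw [ih] at hx
      have hjj : j = jstar := by
        by_contra hne
        exact hx (uni_col h hjs hne)
      subst hjj
      apply Subtype.ext
      by_contra hne
      exact hy' (uni_row h hjs hne)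

theorem par_CA (h : Hyp V a b) (x₀ : SAt a) {i : Fin d} (hi : a i ≠ 0)
    (hp : Par V i) : CA V b x₀ (fA V b x₀ i) = {i} := by
  ext i'
  simp only [Finset.mem_singleton]
  constructor
  · intro hmem
    obtain ⟨hi', hf⟩ := mem_CA.mp hmem
    rw [fA_eq x₀ hi', fA_eq x₀ hi] at hf
    have hr : Relation.ReflTransGen (relE V a b) ⟨i, hi⟩ ⟨i', hi'⟩ :=
      (qk_eq_iff V a b).mp hf.symm
    exact congrArg Subtype.val (par_reach h hi hp hr)
  · intro he
    subst he
    exact mem_CA.mpr ⟨hi, rfl⟩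

theorem matched_b0 (h : Hyp V a b) {j : Fin d} (hm : j ∈ matchedf V a) : b j = 0 := by
  rw [matchedf, Finset.mem_filter] at hm
  obtain ⟨-, i₀, hu, ha0⟩ := hm
  have h0 := h.h1 j
  have hz : ∑ i, V j i * (a i : ℂ) = 0 := Finset.sum_eq_zero (fun i _ => by
    by_cases he : i = i₀
    · subst he; simp [ha0]
    · rw [uni_row h hu he]; simp)
  rw [hz] at h0
  exact_mod_cast h0.symm

variable (V) in
noncomputable def jOf (i : Fin d) : Fin d := if hp : Par V i then hp.choose else i

theorem jOf_spec {i : Fin d} (hp : Par V i) : normSq (V (jOf V i) i) = 1 := by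
  rw [jOf, dif_pos hp]; exact hp.choose_spec

theorem jOf_unique (h : Hyp V a b) {i j : Fin d} (hp : Par V i)
    (hu : normSq (V j i) = 1) : jOf V i = j := by
  by_contra hne
  have h0 := uni_col h (jOf_spec hp) (fun hc => hne hc.symm)
  rw [h0] at hu
  simp at hu

theorem card_matchedf (h : Hyp V a b) :
    (univ.filter (fun i => Par V i ∧ a i = 0)).card = (matchedf V a).card := by
  apply Finset.card_bij (fun i _ => jOf V i)
  · intro i hi
    rw [Finset.mem_filter] at hi
    obtain ⟨-, hp, ha0⟩ := hi
    exact Finset.mem_filter.mpr ⟨mem_univ _, i, jOf_spec hp, ha0⟩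
  · intro i1 h1 i2 h2 hj
    rw [Finset.mem_filter] at h1 h2
    by_contra hne
    have hu1 : normSq (V (jOf V i1) i1) = 1 := jOf_spec h1.2.1
    have hu2 : normSq (V (jOf V i2) i2) = 1 := jOf_spec h2.2.1
    rw [hj] at hu1
    have := uni_row h hu1 (fun hc => hne (hc.symm ▸ rfl))
    rw [this] at hu2
    simp at hu2
  · intro j hj
    rw [matchedf, Finset.mem_filter] at hj
    obtain ⟨-, i, hu, ha0⟩ := hj
    refine ⟨i, Finset.mem_filter.mpr ⟨mem_univ _, ⟨j, hu⟩, ha0⟩, ?_⟩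
    exact jOf_unique h ⟨j, hu⟩ hu

theorem outR_card (h : Hyp V a b) :
    (OutR V a b).card + (SFf b).card + (matchedf V a).card = d := by
  classical
  set mp : Fin d → Prop := fun j => ∃ i, normSq (V j i) = 1 ∧ a i = 0 with hmp
  set Z : Finset (Fin d) := univ.filter (fun j => b j = 0) with hZ
  have hs1 : (SFf b).card + Z.card = d := by
    have := Finset.card_filter_add_card_filter_not
      (s := (univ : Finset (Fin d))) (p := fun j => b j ≠ 0)
    rw [Finset.card_univ, Fintype.card_fin] at this
    have hzz : Z = univ.filter (fun j => ¬ b j ≠ 0) := by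
      rw [hZ]; ext j; simp [not_not]
    rw [SFf, hzz]
    exact this
  have hs2 : (Z.filter mp).card + (Z.filter (fun j => ¬ mp j)).card = Z.card :=
    Finset.card_filter_add_card_filter_not (s := Z) (p := mp)
  have he1 : Z.filter mp = matchedf V a := by
    ext j
    rw [hZ, Finset.filter_filter, matchedf, Finset.mem_filter, Finset.mem_filter]
    constructor
    · rintro ⟨h1, -, h3⟩; exact ⟨h1, h3⟩
    · rintro ⟨h1, h3⟩
      refine ⟨h1, ?_, h3⟩
      exact matched_b0 h (by rw [matchedf, Finset.mem_filter]; exact ⟨h1, h3⟩)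
  have he2 : Z.filter (fun j => ¬ mp j) = OutR V a b := by
    rw [hZ, Finset.filter_filter, OutR]
  rw [he1, he2] at hs2
  omega

theorem card_parQ (h : Hyp V a b) (x₀ : SAt a) :
    (univ.filter (fun t : Qt V a b => ∃ i ∈ CA V b x₀ t, Par V i)).card
      = (univ.filter (fun i => Par V i ∧ a i ≠ 0)).card := by
  symm
  apply Finset.card_bij (fun i _ => fA V b x₀ i)
  · intro i hi
    rw [Finset.mem_filter] at hi
    refine Finset.mem_filter.mpr ⟨mem_univ _, i, mem_CA.mpr ⟨hi.2.2, rfl⟩, hi.2.1⟩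
  · intro i1 h1 i2 h2 hf
    rw [Finset.mem_filter] at h1 h2
    have hc : CA V b x₀ (fA V b x₀ i1) = {i1} := par_CA h x₀ h1.2.2 h1.2.1
    have : i2 ∈ CA V b x₀ (fA V b x₀ i1) := by
      rw [hf]; exact mem_CA.mpr ⟨h2.2.2, rfl⟩
    rw [hc, Finset.mem_singleton] at this
    exact this.symm
  · intro t ht
    rw [Finset.mem_filter] at ht
    obtain ⟨-, i, hiCA, hp⟩ := ht
    obtain ⟨hia, hfa⟩ := mem_CA.mp hiCA
    exact ⟨i, Finset.mem_filter.mpr ⟨mem_univ _, hp, hia⟩, hfa⟩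

theorem sc_rA (h : Hyp V a b) (x₀ : SAt a) {t : Qt V a b} {j₀ : Fin d}
    (hCF : CF h x₀ t = {j₀}) {i : Fin d} (hi : i ∈ CA V b x₀ t) :
    a i = (V j₀ i).re * b j₀ := by
  obtain ⟨hia, hfa⟩ := mem_CA.mp hi
  have := rA h x₀ hia
  rw [hfa, hCF, Finset.sum_singleton] at this
  exact this

theorem mem_CF_j₀ (h : Hyp V a b) (x₀ : SAt a) {t : Qt V a b} {j₀ : Fin d}
    (hCF : CF h x₀ t = {j₀}) : b j₀ ≠ 0 ∧ fF h x₀ j₀ = t :=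
  mem_CF.mp (hCF ▸ Finset.mem_singleton_self j₀)

theorem sc_sum (h : Hyp V a b) (x₀ : SAt a) {t : Qt V a b} {j₀ : Fin d}
    (hCF : CF h x₀ t = {j₀}) :
    ∑ i ∈ CA V b x₀ t, (V j₀ i).re ^ 2 = 1 := by
  obtain ⟨hb0, hff⟩ := mem_CF_j₀ h x₀ hCF
  have hrF := rF h x₀ hb0
  rw [hff] at hrF
  have : b j₀ = (∑ i ∈ CA V b x₀ t, (V j₀ i).re ^ 2) * b j₀ := by
    rw [Finset.sum_mul]
    nth_rewrite 1 [hrF]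
    refine Finset.sum_congr rfl (fun i hi => ?_)
    rw [sc_rA h x₀ hCF hi]; ring
  have h2 : (1:ℝ) * b j₀ = (∑ i ∈ CA V b x₀ t, (V j₀ i).re ^ 2) * b j₀ := by
    rw [one_mul]; exact this
  exact (mul_right_cancel₀ hb0 h2).symm

theorem sc_CA_two (h : Hyp V a b) (x₀ : SAt a) {t : Qt V a b} {j₀ : Fin d}
    (hCF : CF h x₀ t = {j₀}) (hnp : ¬ ∃ i ∈ CA V b x₀ t, Par V i) :
    2 ≤ (CA V b x₀ t).card := by
  have h1 : 1 ≤ (CA V b x₀ t).card := Finset.card_pos.mpr (CA_nonempty x₀ t)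
  rcases Nat.lt_or_ge (CA V b x₀ t).card 2 with hlt | hge
  · exfalso
    have hc1 : (CA V b x₀ t).card = 1 := by omega
    obtain ⟨i, hie⟩ := Finset.card_eq_one.mp hc1
    have hsum := sc_sum h x₀ hCF
    rw [hie, Finset.sum_singleton] at hsum
    have hi : i ∈ CA V b x₀ t := hie ▸ Finset.mem_singleton_self i
    obtain ⟨hia, -⟩ := mem_CA.mp hi
    have hb0 := (mem_CF_j₀ h x₀ hCF).1
    have him : (V j₀ i).im = 0 := blockIm h hia hb0
    have : normSq (V j₀ i) = 1 := by
      rw [Complex.normSq_apply, him]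
      nlinarith [hsum]
    exact hnp ⟨i, hi, j₀, this⟩
  · exact hge

theorem sc_outmass (h : Hyp V a b) (x₀ : SAt a) {t : Qt V a b} {j₀ : Fin d}
    (hCF : CF h x₀ t = {j₀}) {i : Fin d} (hi : i ∈ CA V b x₀ t) :
    ∑ j ∈ OutR V a b, normSq (V j i) = 1 - normSq (V j₀ i) := by
  obtain ⟨hia, hfa⟩ := mem_CA.mp hi
  have hb0 := (mem_CF_j₀ h x₀ hCF).1
  have hj₀ : j₀ ∈ univ \ OutR V a b := by
    rw [Finset.mem_sdiff]
    refine ⟨mem_univ _, fun hc => ?_⟩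
    rw [OutR, Finset.mem_filter] at hc
    exact hb0 hc.2.1
  have hvan : ∀ j ∈ univ \ OutR V a b, j ∉ ({j₀} : Finset (Fin d)) → normSq (V j i) = 0 := by
    intro j hj hjne
    rw [Finset.mem_singleton] at hjne
    rw [Finset.mem_sdiff] at hj
    have hnot := hj.2
    rw [OutR, Finset.mem_filter] at hnot
    push_neg at hnot
    rw [Complex.normSq_eq_zero]
    by_cases hbj : b j = 0
    · obtain ⟨i₀, hu, ha0⟩ := hnot (mem_univ _) hbj
      refine uni_row h hu (fun hc => hia (hc ▸ ha0))
    · by_contra hV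
      have : fF h x₀ j = t := by rw [fF_eq h x₀ hbj hia hV, ← fA_eq x₀ hia, hfa]
      have : j ∈ CF h x₀ t := mem_CF.mpr ⟨hbj, this⟩
      rw [hCF, Finset.mem_singleton] at this
      exact hjne this
  have hsub : ({j₀} : Finset (Fin d)) ⊆ univ \ OutR V a b := by
    intro x hx; rw [Finset.mem_singleton] at hx; subst hx; exact hj₀
  have hout : ∑ j ∈ univ \ OutR V a b, normSq (V j i) = normSq (V j₀ i) := by
    rw [← Finset.sum_singleton (fun j => normSq (V j i)) j₀]
    exact (Finset.sum_subset hsub (fun j hj hjn => hvan j hj hjn)).symm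
  have hsdiff := Finset.sum_sdiff (f := fun j => normSq (V j i))
    (Finset.subset_univ (OutR V a b))
  rw [colmass h i] at hsdiff
  linarith [hsdiff, hout]

theorem ineq3 (h : Hyp V a b) (x₀ : SAt a) :
    (univ.filter (fun t : Qt V a b =>
        (CF h x₀ t).card = 1 ∧ ¬ ∃ i ∈ CA V b x₀ t, Par V i)).card
      ≤ (OutR V a b).card := by
  classical
  set g : Fin d → ℝ := fun i => ∑ j ∈ OutR V a b, normSq (V j i) with hg
  have hgnn : ∀ i, 0 ≤ g i := fun i =>
    Finset.sum_nonneg (fun j _ => Complex.normSq_nonneg _)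
  set Sing := univ.filter (fun t : Qt V a b =>
    (CF h x₀ t).card = 1 ∧ ¬ ∃ i ∈ CA V b x₀ t, Par V i) with hSing
  have key : ∀ t ∈ Sing, (1 : ℝ) ≤ ∑ i ∈ CA V b x₀ t, g i := by
    intro t ht
    rw [hSing, Finset.mem_filter] at ht
    obtain ⟨-, hc1, hnp⟩ := ht
    obtain ⟨j₀, hCFe⟩ := Finset.card_eq_one.mp hc1
    have hb0 := (mem_CF_j₀ h x₀ hCFe).1
    have hcard := sc_CA_two h x₀ hCFe hnp
    have hsum := sc_sum h x₀ hCFe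
    have heq : ∑ i ∈ CA V b x₀ t, g i = (CA V b x₀ t).card - 1 := by
      have : ∀ i ∈ CA V b x₀ t, g i = 1 - (V j₀ i).re ^ 2 := by
        intro i hi
        show ∑ j ∈ OutR V a b, normSq (V j i) = 1 - (V j₀ i).re ^ 2
        rw [sc_outmass h x₀ hCFe hi]
        obtain ⟨hia, -⟩ := mem_CA.mp hi
        rw [Complex.normSq_apply, blockIm h hia hb0]
        ring
      rw [Finset.sum_congr rfl this, Finset.sum_sub_distrib, Finset.sum_const,
        nsmul_eq_mul, mul_one, hsum]
    rw [heq]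
    have : (2 : ℝ) ≤ (CA V b x₀ t).card := by exact_mod_cast hcard
    linarith
  have step1 : ((Sing.card : ℝ)) ≤ ∑ t ∈ Sing, ∑ i ∈ CA V b x₀ t, g i := by
    calc ((Sing.card : ℝ)) = ∑ _t ∈ Sing, (1:ℝ) := by
          rw [Finset.sum_const, nsmul_eq_mul, mul_one]
      _ ≤ _ := Finset.sum_le_sum key
  have step2 : ∑ t ∈ Sing, ∑ i ∈ CA V b x₀ t, g i
      ≤ ∑ t ∈ (univ : Finset (Qt V a b)), ∑ i ∈ CA V b x₀ t, g i := by
    refine Finset.sum_le_sum_of_subset_of_nonneg (Finset.subset_univ _) ?_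
    intro t _ _
    exact Finset.sum_nonneg (fun i _ => hgnn i)
  have step3 : ∑ t ∈ (univ : Finset (Qt V a b)), ∑ i ∈ CA V b x₀ t, g i
      = ∑ i ∈ SAf a, g i := by
    exact Finset.sum_fiberwise_of_maps_to
      (fun i (_ : i ∈ SAf a) => Finset.mem_univ (fA V b x₀ i)) g
  have step4 : ∑ i ∈ SAf a, g i ≤ ∑ i ∈ (univ : Finset (Fin d)), g i :=
    Finset.sum_le_sum_of_subset_of_nonneg (Finset.subset_univ _) (fun i _ _ => hgnn i)
  have step5 : ∑ i ∈ (univ : Finset (Fin d)), g i = (OutR V a b).card := by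
    rw [hg]
    rw [Finset.sum_comm]
    rw [Finset.sum_congr rfl (fun j _ => rowmass h j)]
    rw [Finset.sum_const, nsmul_eq_mul, mul_one]
  have : ((Sing.card : ℝ)) ≤ ((OutR V a b).card : ℝ) := by
    calc ((Sing.card : ℝ)) ≤ _ := step1
      _ ≤ _ := step2
      _ = _ := step3
      _ ≤ _ := step4
      _ = _ := step5
  exact_mod_cast this

theorem ineq2 (h : Hyp V a b) (x₀ : SAt a) :
    2 * Fintype.card (Qt V a b)
      ≤ (SFf b).card
        + (univ.filter (fun t : Qt V a b => ∃ i ∈ CA V b x₀ t, Par V i)).card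
        + (univ.filter (fun t : Qt V a b =>
            (CF h x₀ t).card = 1 ∧ ¬ ∃ i ∈ CA V b x₀ t, Par V i)).card := by
  classical
  have hpt : ∀ t : Qt V a b, 2 ≤ (CF h x₀ t).card
      + (if (∃ i ∈ CA V b x₀ t, Par V i) then 1 else 0)
      + (if ((CF h x₀ t).card = 1 ∧ ¬ ∃ i ∈ CA V b x₀ t, Par V i) then 1 else 0) := by
    intro t
    have h1 : 1 ≤ (CF h x₀ t).card := Finset.card_pos.mpr (CF_nonempty h x₀ t)
    by_cases hpar : ∃ i ∈ CA V b x₀ t, Par V i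
    · rw [if_pos hpar, if_neg (fun hc => hc.2 hpar)]
      omega
    · by_cases hs : (CF h x₀ t).card = 1
      · rw [if_neg hpar, if_pos ⟨hs, hpar⟩]
        omega
      · rw [if_neg hpar, if_neg (fun hc => hs hc.1)]
        omega
  have hsum := Finset.sum_le_sum (fun t (_ : t ∈ (univ : Finset (Qt V a b))) => hpt t)
  rw [Finset.sum_const, smul_eq_mul, Finset.card_univ] at hsum
  have e1 : ∑ t : Qt V a b, ((CF h x₀ t).card
      + (if (∃ i ∈ CA V b x₀ t, Par V i) then 1 else 0)
      + (if ((CF h x₀ t).card = 1 ∧ ¬ ∃ i ∈ CA V b x₀ t, Par V i) then 1 else 0))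
      = (SFf b).card
        + (univ.filter (fun t : Qt V a b => ∃ i ∈ CA V b x₀ t, Par V i)).card
        + (univ.filter (fun t : Qt V a b =>
            (CF h x₀ t).card = 1 ∧ ¬ ∃ i ∈ CA V b x₀ t, Par V i)).card := by
    rw [Finset.sum_add_distrib, Finset.sum_add_distrib]
    congr 1
    · congr 1
      · exact (partitionF h x₀).symm
      · rw [Finset.sum_boole]; simp
    · rw [Finset.sum_boole]; simp
  rw [e1] at hsum
  calc 2 * Fintype.card (Qt V a b) = Fintype.card (Qt V a b) * 2 := by ring
    _ ≤ _ := hsum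

variable (V a b) in
noncomputable def Gm (x y : SAt a) : ℝ := ∑ j ∈ SFf b, (V j x.1).re * (V j y.1).re

theorem Gnn (h : Hyp V a b) (x y : SAt a) : 0 ≤ Gm V a b x y :=
  Finset.sum_nonneg (fun j hj =>
    mul_nonneg (blockRe h x.2 (mem_SFf.mp hj)) (blockRe h y.2 (mem_SFf.mp hj)))

theorem Gzero (h : Hyp V a b) {x y : SAt a} (hne : qk V a b x ≠ qk V a b y) :
    Gm V a b x y = 0 := by
  by_contra hG
  obtain ⟨j, hj, hterm⟩ := Finset.exists_ne_zero_of_sum_ne_zero hG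
  have hbj : b j ≠ 0 := mem_SFf.mp hj
  have hx : V j x.1 ≠ 0 := fun hc => hterm (by rw [hc]; simp)
  have hy : V j y.1 ≠ 0 := fun hc => hterm (by rw [hc]; simp)
  exact hne ((qk_eq_iff V a b).mpr (Relation.ReflTransGen.single ⟨j, hbj, hx, hy⟩))

theorem Gpos (h : Hyp V a b) {x y : SAt a} (hr : relE V a b x y) :
    0 < Gm V a b x y := by
  obtain ⟨j, hbj, hx, hy⟩ := hr
  refine Finset.sum_pos' (fun k hk =>
    mul_nonneg (blockRe h x.2 (mem_SFf.mp hk)) (blockRe h y.2 (mem_SFf.mp hk)))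
    ⟨j, mem_SFf.mpr hbj, mul_pos (blockRePos h x.2 hbj hx) (blockRePos h y.2 hbj hy)⟩

theorem Ga (h : Hyp V a b) (x : SAt a) :
    a x.1 = ∑ y : SAt a, Gm V a b x y * a y.1 := by
  have e0 : ∀ j, b j ≠ 0 → b j = ∑ y : SAt a, (V j y.1).re * a y.1 := by
    intro j hj
    rw [r1 h hj]
    exact (Finset.sum_subtype (SAf a) (fun i => mem_SAf) (fun i => (V j i).re * a i))
  calc a x.1 = ∑ j ∈ SFf b, (V j x.1).re * b j := r2 h x.2
    _ = ∑ j ∈ SFf b, ∑ y : SAt a, (V j x.1).re * ((V j y.1).re * a y.1) := by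
        refine Finset.sum_congr rfl (fun j hj => ?_)
        rw [← Finset.mul_sum, ← e0 j (mem_SFf.mp hj)]
    _ = ∑ y : SAt a, ∑ j ∈ SFf b, (V j x.1).re * ((V j y.1).re * a y.1) :=
        Finset.sum_comm
    _ = ∑ y : SAt a, Gm V a b x y * a y.1 := by
        refine Finset.sum_congr rfl (fun y _ => ?_)
        rw [Gm, Finset.sum_mul]
        exact Finset.sum_congr rfl (fun j _ => by ring)

theorem kerT_G (h : Hyp V a b) {v : SAt a → ℂ}
    (hv : ∀ j : Fin d, j ∈ OutR V a b → ∑ x : SAt a, V j x.1 * v x = 0) (x : SAt a) :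
    v x = ∑ y : SAt a, ((Gm V a b x y : ℝ) : ℂ) * v y := by
  classical
  set w : Fin d → ℂ := fun j => ∑ y : SAt a, V j y.1 * v y with hw
  have s2 : v x = ∑ y : SAt a, (∑ j : Fin d, conj (V j x.1) * V j y.1) * v y := by
    have e : ∀ y : SAt a, (∑ j : Fin d, conj (V j x.1) * V j y.1) * v y
        = if x = y then v y else 0 := by
      intro y
      rw [h.hcol x.1 y.1]
      by_cases he : x = y
      · rw [if_pos he, if_pos (congrArg Subtype.val he), one_mul]
      · rw [if_neg he, if_neg (fun hc => he (Subtype.ext hc)), zero_mul]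
    rw [Finset.sum_congr rfl (fun y _ => e y), Finset.sum_ite_eq]
    simp
  have s3 : ∑ y : SAt a, (∑ j : Fin d, conj (V j x.1) * V j y.1) * v y
      = ∑ j : Fin d, conj (V j x.1) * w j := by
    have e1 : ∀ y : SAt a, (∑ j : Fin d, conj (V j x.1) * V j y.1) * v y
        = ∑ j : Fin d, conj (V j x.1) * (V j y.1 * v y) := by
      intro y; rw [Finset.sum_mul]; exact Finset.sum_congr rfl (fun j _ => by ring)
    rw [Finset.sum_congr rfl (fun y _ => e1 y), Finset.sum_comm]
    refine Finset.sum_congr rfl (fun j _ => ?_)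
    rw [hw, Finset.mul_sum]
  have s4 : ∀ j ∈ (univ : Finset (Fin d)), j ∉ SFf b → conj (V j x.1) * w j = 0 := by
    intro j _ hjn
    have hbj : b j = 0 := by
      by_contra hc; exact hjn (mem_SFf.mpr hc)
    have hwj : w j = 0 := by
      by_cases hout : j ∈ OutR V a b
      · exact hv j hout
      · rw [OutR, Finset.mem_filter] at hout
        push_neg at hout
        obtain ⟨i₀, hu, ha0⟩ := hout (mem_univ _) hbj
        rw [hw]
        exact Finset.sum_eq_zero (fun y _ => by
          rw [uni_row h hu (fun hc : y.1 = i₀ => y.2 (hc ▸ ha0)), zero_mul])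
    rw [hwj, mul_zero]
  have s5 : ∑ j : Fin d, conj (V j x.1) * w j = ∑ j ∈ SFf b, conj (V j x.1) * w j :=
    (Finset.sum_subset (Finset.subset_univ _) s4).symm
  have s7 : ∀ j ∈ SFf b, conj (V j x.1) * w j
      = ∑ y : SAt a, (((V j x.1).re * (V j y.1).re : ℝ) : ℂ) * v y := by
    intro j hj
    have hbj := mem_SFf.mp hj
    rw [hw, Finset.mul_sum]
    refine Finset.sum_congr rfl (fun y _ => ?_)
    rw [blockConj h x.2 hbj]
    nth_rewrite 1 [blockEqRe h x.2 hbj]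
    nth_rewrite 1 [blockEqRe h y.2 hbj]
    push_cast
    ring
  calc v x = ∑ y : SAt a, (∑ j : Fin d, conj (V j x.1) * V j y.1) * v y := s2
    _ = ∑ j : Fin d, conj (V j x.1) * w j := s3
    _ = ∑ j ∈ SFf b, conj (V j x.1) * w j := s5
    _ = ∑ j ∈ SFf b, ∑ y : SAt a, (((V j x.1).re * (V j y.1).re : ℝ) : ℂ) * v y :=
        Finset.sum_congr rfl s7
    _ = ∑ y : SAt a, ∑ j ∈ SFf b, (((V j x.1).re * (V j y.1).re : ℝ) : ℂ) * v y :=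
        Finset.sum_comm
    _ = ∑ y : SAt a, ((Gm V a b x y : ℝ) : ℂ) * v y := by
        refine Finset.sum_congr rfl (fun y _ => ?_)
        rw [Gm]
        push_cast
        rw [Finset.sum_mul]

theorem perron (h : Hyp V a b) {u : SAt a → ℝ}
    (hu : ∀ x, u x = ∑ y : SAt a, Gm V a b x y * u y) (t : Qt V a b) :
    ∃ μ : ℝ, ∀ x : SAt a, qk V a b x = t → u x = μ * a x.1 := by
  classical
  by_cases hne : ∃ x : SAt a, qk V a b x = t
  swap
  · push_neg at hne
    exact ⟨0, fun x hx => absurd hx (hne x)⟩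
  set Ct : Finset (SAt a) := univ.filter (fun x => qk V a b x = t) with hCt
  have hCtne : Ct.Nonempty := by
    obtain ⟨x, hx⟩ := hne
    exact ⟨x, Finset.mem_filter.mpr ⟨mem_univ _, hx⟩⟩
  obtain ⟨i₀, hi₀mem, hmax⟩ := Ct.exists_max_image (fun x => u x / a x.1) hCtne
  have hi₀t : qk V a b i₀ = t := (Finset.mem_filter.mp hi₀mem).2
  set μ := u i₀ / a i₀.1 with hμ
  set hf : SAt a → ℝ := fun x => if qk V a b x = t then μ * a x.1 - u x else 0 with hhf
  have apos : ∀ x : SAt a, 0 < a x.1 :=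
    fun x => lt_of_le_of_ne (h.ha x.1) (Ne.symm x.2)
  have hnn : ∀ x, 0 ≤ hf x := by
    intro x
    simp only [hhf]
    by_cases hx : qk V a b x = t
    · rw [if_pos hx]
      have := hmax x (Finset.mem_filter.mpr ⟨mem_univ _, hx⟩)
      rw [div_le_div_iff₀ (apos x) (apos i₀)] at this
      have h2 : u x ≤ μ * a x.1 := by
        rw [hμ, div_mul_eq_mul_div, le_div_iff₀ (apos i₀)]
        linarith [this]
      linarith
    · rw [if_neg hx]
  have hfix : ∀ x, hf x = ∑ y : SAt a, Gm V a b x y * hf y := by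
    intro x
    by_cases hx : qk V a b x = t
    · have e : ∀ y : SAt a, Gm V a b x y * hf y = Gm V a b x y * (μ * a y.1 - u y) := by
        intro y
        by_cases hy : qk V a b y = t
        · simp only [hhf]; rw [if_pos hy]
        · rw [Gzero h (fun hc => hy (hc ▸ hx))]
          simp
      rw [Finset.sum_congr rfl (fun y _ => e y)]
      have : ∑ y : SAt a, Gm V a b x y * (μ * a y.1 - u y)
          = μ * (∑ y : SAt a, Gm V a b x y * a y.1) - ∑ y : SAt a, Gm V a b x y * u y := by
        rw [Finset.mul_sum, ← Finset.sum_sub_distrib]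
        exact Finset.sum_congr rfl (fun y _ => by ring)
      rw [this, ← Ga h x, ← hu x]
      simp only [hhf]
      rw [if_pos hx]
    · simp only [hhf]
      rw [if_neg hx]
      symm
      refine Finset.sum_eq_zero (fun y _ => ?_)
      by_cases hy : qk V a b y = t
      · rw [Gzero h (by rw [hy]; exact hx), zero_mul]
      · rw [if_neg hy, mul_zero]
  have hzero : hf i₀ = 0 := by
    simp only [hhf]
    rw [if_pos hi₀t, hμ, div_mul_cancel₀ _ (ne_of_gt (apos i₀)), sub_self]
  have hstep : ∀ x y : SAt a, relE V a b x y → hf x = 0 → hf y = 0 := by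
    intro x y hr hx0
    have hsum : ∑ z : SAt a, Gm V a b x z * hf z = 0 := by rw [← hfix x, hx0]
    have hterm := (Finset.sum_eq_zero_iff_of_nonneg
      (fun z _ => mul_nonneg (Gnn h x z) (hnn z))).mp hsum y (mem_univ _)
    rcases mul_eq_zero.mp hterm with hG | hy
    · exact absurd hG (ne_of_gt (Gpos h hr))
    · exact hy
  have hprop : ∀ {x y : SAt a}, Relation.ReflTransGen (relE V a b) x y →
      hf x = 0 → hf y = 0 := by
    intro x y hxy
    induction hxy with
    | refl => exact id
    | @tail p q hxp hpq ih => exact fun h0 => hstep p q hpq (ih h0)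
  refine ⟨μ, fun x hx => ?_⟩
  have hreach : Relation.ReflTransGen (relE V a b) i₀ x :=
    (qk_eq_iff V a b).mp (by rw [hi₀t, hx])
  have := hprop hreach hzero
  simp only [hhf, if_pos hx] at this
  linarith

variable (V a b) in
noncomputable def Tmap : (SAt a → ℂ) →ₗ[ℂ] ({j : Fin d // j ∈ OutR V a b} → ℂ) where
  toFun v := fun j => ∑ x : SAt a, V j.1 x.1 * v x
  map_add' u v := by
    funext j
    simp only [Pi.add_apply, mul_add, Finset.sum_add_distrib]
  map_smul' c v := by
    funext j
    simp only [Pi.smul_apply, smul_eq_mul, RingHom.id_apply, Finset.mul_sum]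
    exact Finset.sum_congr rfl (fun x _ => by ring)

variable (V a b) in
noncomputable def Lmap : (Qt V a b → ℂ) →ₗ[ℂ] (SAt a → ℂ) where
  toFun c := fun x => c (qk V a b x) * (a x.1 : ℂ)
  map_add' u v := by
    funext x
    simp only [Pi.add_apply]
    ring
  map_smul' c v := by
    funext x
    simp only [Pi.smul_apply, smul_eq_mul, RingHom.id_apply]
    ring

theorem kerT_sub (h : Hyp V a b) :
    LinearMap.ker (Tmap V a b) ≤ LinearMap.range (Lmap V a b) := by
  intro v hv
  have hv' : ∀ j : Fin d, j ∈ OutR V a b → ∑ x : SAt a, V j x.1 * v x = 0 := by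
    intro j hj
    have := LinearMap.mem_ker.mp hv
    exact congrFun this ⟨j, hj⟩
  have hG := kerT_G h hv'
  have hur : ∀ x : SAt a, (v x).re = ∑ y : SAt a, Gm V a b x y * (v y).re := by
    intro x
    have := congrArg Complex.re (hG x)
    rw [Complex.re_sum] at this
    rw [this]
    exact Finset.sum_congr rfl (fun y _ => by
      rw [Complex.re_ofReal_mul])
  have hui : ∀ x : SAt a, (v x).im = ∑ y : SAt a, Gm V a b x y * (v y).im := by
    intro x
    have := congrArg Complex.im (hG x)
    rw [Complex.im_sum] at this
    rw [this]
    exact Finset.sum_congr rfl (fun y _ => by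
      rw [Complex.im_ofReal_mul])
  choose μr hμr using fun t => perron h hur t
  choose μi hμi using fun t => perron h hui t
  refine ⟨fun t => ⟨μr t, μi t⟩, ?_⟩
  funext x
  show (⟨μr (qk V a b x), μi (qk V a b x)⟩ : ℂ) * (a x.1 : ℂ) = v x
  apply Complex.ext
  · rw [Complex.mul_re]
    simp only [Complex.ofReal_re, Complex.ofReal_im, mul_zero, sub_zero]
    exact (hμr (qk V a b x) x rfl).symm
  · rw [Complex.mul_im]
    simp only [Complex.ofReal_re, Complex.ofReal_im, mul_zero, zero_add]
    exact (hμi (qk V a b x) x rfl).symm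

theorem ineq1 (h : Hyp V a b) :
    (SAf a).card ≤ Fintype.card (Qt V a b) + (OutR V a b).card := by
  classical
  have hrn := LinearMap.finrank_range_add_finrank_ker (Tmap V a b)
  have hdom : Module.finrank ℂ (SAt a → ℂ) = (SAf a).card := by
    rw [Module.finrank_fintype_fun_eq_card]
    exact Fintype.card_of_subtype (SAf a) (fun i => mem_SAf)
  have hrange : Module.finrank ℂ ↥(LinearMap.range (Tmap V a b)) ≤ (OutR V a b).card := by
    have h5 := Submodule.finrank_le (LinearMap.range (Tmap V a b))
    rw [Module.finrank_fintype_fun_eq_card] at h5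
    have hc : Fintype.card {j : Fin d // j ∈ OutR V a b} = (OutR V a b).card :=
      Fintype.card_of_subtype (OutR V a b) (fun x => Iff.rfl)
    omega
  have hker : Module.finrank ℂ ↥(LinearMap.ker (Tmap V a b)) ≤ Fintype.card (Qt V a b) := by
    have h1 : Module.finrank ℂ ↥(LinearMap.ker (Tmap V a b))
        ≤ Module.finrank ℂ ↥(LinearMap.range (Lmap V a b)) :=
      Submodule.finrank_mono (kerT_sub h)
    have h2 := LinearMap.finrank_range_le (Lmap V a b)
    rw [Module.finrank_fintype_fun_eq_card] at h2
    omega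
  omega

theorem core (h : Hyp V a b) :
    2 * (SAf a).card + 2 * (SFf b).card
      + 3 * (univ.filter (fun i => Par V i ∧ a i = 0)).card
      ≤ 3 * d + (univ.filter (fun i => Par V i ∧ a i ≠ 0)).card := by
  classical
  by_cases hSA : (SAf a).Nonempty
  · obtain ⟨i₀, hi₀⟩ := hSA
    have x₀ : SAt a := ⟨i₀, mem_SAf.mp hi₀⟩
    have I1 := ineq1 h
    have I2 := ineq2 h x₀
    have I3 := ineq3 h x₀
    have IC := outR_card h
    have IM := card_matchedf h
    have IP := card_parQ h x₀
    omega
  · have hNA : (SAf a).card = 0 := by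
      rw [Finset.not_nonempty_iff_eq_empty] at hSA
      rw [hSA]; rfl
    have hae : ∀ i, a i = 0 := by
      intro i
      by_contra hc
      rw [Finset.not_nonempty_iff_eq_empty] at hSA
      have : i ∈ SAf a := mem_SAf.mpr hc
      rw [hSA] at this
      exact absurd this (Finset.notMem_empty i)
    have hb0 : ∀ j, b j = 0 := by
      intro j
      have h0 := h.h1 j
      have hz : ∑ i, V j i * (a i : ℂ) = 0 :=
        Finset.sum_eq_zero (fun i _ => by rw [hae i]; simp)
      rw [hz] at h0
      exact_mod_cast h0.symm
    have hNF : (SFf b).card = 0 := by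
      have : SFf b = ∅ := by
        rw [SFf]
        ext j; simp [hb0 j]
      rw [this]; rfl
    have hq : (univ.filter (fun i => Par V i ∧ a i = 0)).card ≤ d := by
      calc (univ.filter (fun i => Par V i ∧ a i = 0)).card
          ≤ (univ : Finset (Fin d)).card := Finset.card_filter_le _ _
        _ = d := by rw [Finset.card_univ, Fintype.card_fin]
    omega

end

end KD

theorem stmt8 (d : ℕ)
    (a f : OrthonormalBasis (Fin d) ℂ (EuclideanSpace ℂ (Fin d)))
    (ψ : EuclideanSpace ℂ (Fin d)) (hψ : ‖ψ‖ = 1)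
    (hclassical : ∀ i j, 0 ≤ ⟪f j, a i⟫ * ⟪a i, ψ⟫ * ⟪ψ, f j⟫)
    (NA NF npar nbarpar : ℕ)
    (hNA : NA = (Finset.univ.filter fun i => ⟪a i, ψ⟫ ≠ 0).card)
    (hNF : NF = (Finset.univ.filter fun j => ⟪f j, ψ⟫ ≠ 0).card)
    (hnpar : npar =
      (Finset.univ.filter fun i => (∃ j, ‖⟪a i, f j⟫‖ = 1) ∧ ⟪a i, ψ⟫ ≠ 0).card)
    (hnbarpar : nbarpar =
      (Finset.univ.filter fun i => (∃ j, ‖⟪a i, f j⟫‖ = 1) ∧ ⟪a i, ψ⟫ = 0).card) :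
    (2 * NA + 2 * NF : ℤ) ≤ 3 * d + npar - 3 * nbarpar := by
  classical
  set α : Fin d → ℂ := fun i => (inner ℂ (a i) ψ : ℂ) with hα
  set β : Fin d → ℂ := fun j => (inner ℂ (f j) ψ : ℂ) with hβ
  set w : Fin d → Fin d → ℂ := fun j i => (inner ℂ (f j) (a i) : ℂ) with hw
  set av : Fin d → ℝ := fun i => ‖α i‖ with hav
  set bv : Fin d → ℝ := fun j => ‖β j‖ with hbv
  set φA : Fin d → ℂ := fun i => if α i = 0 then 1 else α i / (‖α i‖ : ℂ) with hφA
  set φF : Fin d → ℂ := fun j => if β j = 0 then 1 else conj (β j) / (‖β j‖ : ℂ) with hφF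
  set V : Fin d → Fin d → ℂ := fun j i => φF j * w j i * φA i with hV
  -- helper: unit phases
  have hnormsq : ∀ z : ℂ, normSq z = ‖z‖ * ‖z‖ := by
    intro z
    rw [← Complex.sq_norm]
    ring
  have key_unit : ∀ z : ℂ, z ≠ 0 → conj (z / (‖z‖ : ℂ)) * (z / (‖z‖ : ℂ)) = 1 := by
    intro z hz
    rw [map_div₀, Complex.conj_ofReal, div_mul_div_comm, ← Complex.normSq_eq_conj_mul_self,
      ← Complex.ofReal_mul, hnormsq z]
    rw [div_self]
    simp only [ne_eq, Complex.ofReal_eq_zero]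
    exact mul_ne_zero (norm_ne_zero_iff.mpr hz) (norm_ne_zero_iff.mpr hz)
  have hns : ∀ z : ℂ, (normSq z : ℂ) / (‖z‖ : ℂ) = (‖z‖ : ℂ) := by
    intro z
    by_cases hz : z = 0
    · simp [hz]
    · rw [hnormsq z]
      push_cast
      rw [mul_div_assoc, div_self (by simpa using norm_ne_zero_iff.mpr hz), mul_one]
  have hφA_unit : ∀ i, conj (φA i) * φA i = 1 := by
    intro i
    by_cases hz : α i = 0
    · simp [hφA, hz]
    · simp only [hφA, if_neg hz]
      exact key_unit (α i) hz
  have hφF_unit : ∀ j, conj (φF j) * φF j = 1 := by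
    intro j
    by_cases hz : β j = 0
    · simp [hφF, hz]
    · simp only [hφF, if_neg hz]
      have hcz : conj (β j) ≠ 0 := by
        simp only [ne_eq, map_eq_zero]
        exact hz
      have := key_unit (conj (β j)) hcz
      rwa [show ‖conj (β j)‖ = ‖β j‖ from RCLike.norm_conj _] at this
  have hφA_mul : ∀ i, φA i * (av i : ℂ) = α i := by
    intro i
    by_cases hz : α i = 0
    · simp [hφA, hav, hz]
    · simp only [hφA, hav, if_neg hz]
      rw [div_mul_cancel₀]
      simpa using norm_ne_zero_iff.mpr hz
  have hφF_mul : ∀ j, φF j * (bv j : ℂ) = conj (β j) := by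
    intro j
    by_cases hz : β j = 0
    · simp [hφF, hbv, hz]
    · simp only [hφF, hbv, if_neg hz]
      rw [div_mul_cancel₀]
      simpa using norm_ne_zero_iff.mpr hz
  have hconjφA_mul : ∀ i, conj (φA i) * α i = (av i : ℂ) := by
    intro i
    by_cases hz : α i = 0
    · simp [hφA, hav, hz]
    · simp only [hφA, hav, if_neg hz]
      rw [map_div₀, Complex.conj_ofReal, div_mul_eq_mul_div, ← Complex.normSq_eq_conj_mul_self]
      exact hns (α i)
  have hconjφF_mul : ∀ j, conj (φF j) * (bv j : ℂ) = β j := by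
    intro j
    by_cases hz : β j = 0
    · simp [hφF, hbv, hz]
    · simp only [hφF, hbv, if_neg hz]
      rw [map_div₀, Complex.conj_ofReal, Complex.conj_conj, div_mul_cancel₀]
      simpa using norm_ne_zero_iff.mpr hz
  -- Hyp fields
  have hcol : ∀ i i', ∑ j, conj (V j i) * V j i' = if i = i' then 1 else 0 := by
    intro i i'
    have e1 : ∀ j, conj (V j i) * V j i'
        = (conj (φA i) * φA i') * ((conj (φF j) * φF j) * (conj (w j i) * w j i')) := by
      intro j
      simp only [hV, map_mul]
      ring
    rw [Finset.sum_congr rfl (fun j _ => e1 j), ← Finset.mul_sum]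
    have e2 : ∀ j, (conj (φF j) * φF j) * (conj (w j i) * w j i') = conj (w j i) * w j i' := by
      intro j; rw [hφF_unit j, one_mul]
    rw [Finset.sum_congr rfl (fun j _ => e2 j)]
    have e3 : ∑ j, conj (w j i) * w j i' = if i = i' then 1 else 0 := by
      have e4 : ∀ j, conj (w j i) * w j i'
          = (inner ℂ (a i) (f j) : ℂ) * (inner ℂ (f j) (a i') : ℂ) := by
        intro j
        simp only [hw]
        rw [inner_conj_symm]
      rw [Finset.sum_congr rfl (fun j _ => e4 j), f.sum_inner_mul_inner]
      exact orthonormal_iff_ite.mp a.orthonormal i i'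
    rw [e3]
    by_cases he : i = i'
    · subst he
      rw [if_pos rfl, mul_one]
      exact hφA_unit i
    · rw [if_neg he, mul_zero]
  have hrow : ∀ j j', ∑ i, V j i * conj (V j' i) = if j = j' then 1 else 0 := by
    intro j j'
    have e1 : ∀ i, V j i * conj (V j' i)
        = (φF j * conj (φF j')) * ((conj (φA i) * φA i) * (w j i * conj (w j' i))) := by
      intro i
      simp only [hV, map_mul]
      ring
    rw [Finset.sum_congr rfl (fun i _ => e1 i), ← Finset.mul_sum]
    have e2 : ∀ i, (conj (φA i) * φA i) * (w j i * conj (w j' i)) = w j i * conj (w j' i) := by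
      intro i; rw [hφA_unit i, one_mul]
    rw [Finset.sum_congr rfl (fun i _ => e2 i)]
    have e3 : ∑ i, w j i * conj (w j' i) = if j = j' then 1 else 0 := by
      have e4 : ∀ i, w j i * conj (w j' i)
          = (inner ℂ (f j) (a i) : ℂ) * (inner ℂ (a i) (f j') : ℂ) := by
        intro i
        simp only [hw]
        rw [inner_conj_symm]
      rw [Finset.sum_congr rfl (fun i _ => e4 i), a.sum_inner_mul_inner]
      exact orthonormal_iff_ite.mp f.orthonormal j j'
    rw [e3]
    by_cases he : j = j'
    · subst he
      rw [if_pos rfl, mul_one, mul_comm]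
      exact hφF_unit j
    · rw [if_neg he, mul_zero]
  have h1 : ∀ j, ∑ i, V j i * (av i : ℂ) = (bv j : ℂ) := by
    intro j
    have e1 : ∀ i, V j i * (av i : ℂ) = φF j * (w j i * α i) := by
      intro i
      have h5 := hφA_mul i
      calc φF j * w j i * φA i * (av i : ℂ)
          = φF j * (w j i * (φA i * (av i : ℂ))) := by ring
        _ = φF j * (w j i * α i) := by rw [h5]
    rw [Finset.sum_congr rfl (fun i _ => e1 i), ← Finset.mul_sum]
    have e2 : ∑ i, w j i * α i = β j := a.sum_inner_mul_inner (f j) ψ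
    rw [e2]
    by_cases hz : β j = 0
    · simp [hbv, hz]
    · simp only [hφF, hbv, if_neg hz]
      rw [div_mul_eq_mul_div, ← Complex.normSq_eq_conj_mul_self]
      exact hns (β j)
  have h2 : ∀ i, ∑ j, conj (V j i) * (bv j : ℂ) = (av i : ℂ) := by
    intro i
    have e1 : ∀ j, conj (V j i) * (bv j : ℂ) = conj (φA i) * (conj (w j i) * β j) := by
      intro j
      have h5 := hconjφF_mul j
      simp only [hV, map_mul]
      calc conj (φF j) * conj (w j i) * conj (φA i) * (bv j : ℂ)
          = conj (φA i) * (conj (w j i) * (conj (φF j) * (bv j : ℂ))) := by ring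
        _ = conj (φA i) * (conj (w j i) * β j) := by rw [h5]
    rw [Finset.sum_congr rfl (fun j _ => e1 j), ← Finset.mul_sum]
    have e2 : ∑ j, conj (w j i) * β j = α i := by
      have e4 : ∀ j, conj (w j i) * β j
          = (inner ℂ (a i) (f j) : ℂ) * (inner ℂ (f j) ψ : ℂ) := by
        intro j
        simp only [hw, hβ]
        rw [inner_conj_symm]
      rw [Finset.sum_congr rfl (fun j _ => e4 j)]
      exact f.sum_inner_mul_inner (a i) ψ
    rw [e2]
    exact hconjφA_mul i
  have h4 : ∀ i j, av i ≠ 0 → bv j ≠ 0 → 0 ≤ V j i := by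
    intro i j hai hbj
    have hq : 0 ≤ w j i * α i * conj (β j) := by
      have := hclassical i j
      rwa [show (inner ℂ ψ (f j) : ℂ) = conj (β j) from (inner_conj_symm _ _).symm] at this
    have hVq : V j i * ((av i * bv j : ℝ) : ℂ) = w j i * α i * conj (β j) := by
      rw [Complex.ofReal_mul]
      have h5 := hφA_mul i
      have h6 := hφF_mul j
      calc φF j * w j i * φA i * ((av i : ℂ) * (bv j : ℂ))
          = w j i * (φA i * (av i : ℂ)) * (φF j * (bv j : ℂ)) := by ring
        _ = w j i * α i * conj (β j) := by rw [h5, h6]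
    have hcpos : 0 < av i * bv j :=
      mul_pos (lt_of_le_of_ne (norm_nonneg _) (Ne.symm hai))
        (lt_of_le_of_ne (norm_nonneg _) (Ne.symm hbj))
    rw [Complex.le_def] at hq
    simp only [Complex.zero_re, Complex.zero_im] at hq
    have hVq' : ((av i * bv j : ℝ) : ℂ) * V j i = w j i * α i * conj (β j) := by
      rw [mul_comm]; exact hVq
    have hre := congrArg Complex.re hVq'
    rw [Complex.re_ofReal_mul] at hre
    have him := congrArg Complex.im hVq'
    rw [Complex.im_ofReal_mul] at him
    rw [Complex.le_def]
    constructor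
    · simp only [Complex.zero_re]
      nlinarith [hq.1, hre, hcpos]
    · simp only [Complex.zero_im]
      have h6 : (av i * bv j) * (V j i).im = 0 := by rw [him, ← hq.2]
      rcases mul_eq_zero.mp h6 with h7 | h7
      · exact absurd h7 (ne_of_gt hcpos)
      · exact h7.symm
  have H : KD.Hyp V av bv :=
    ⟨fun i => norm_nonneg _, fun j => norm_nonneg _, hcol, hrow, h1, h2, h4⟩
  have C := KD.core H
  -- translate the filters
  have hParIff : ∀ i, KD.Par V i ↔ ∃ j, ‖(inner ℂ (a i) (f j) : ℂ)‖ = 1 := by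
    intro i
    have hnorm : ∀ j, ‖V j i‖ = ‖(inner ℂ (a i) (f j) : ℂ)‖ := by
      intro j
      have hφAn : ‖φA i‖ = 1 := by
        by_cases hz : α i = 0
        · simp [hφA, hz]
        · simp only [hφA, if_neg hz]
          rw [norm_div]
          rw [show ‖((‖α i‖ : ℝ) : ℂ)‖ = ‖α i‖ from by
            rw [Complex.norm_real]; exact abs_norm _]
          exact div_self (norm_ne_zero_iff.mpr hz)
      have hφFn : ‖φF j‖ = 1 := by
        by_cases hz : β j = 0
        · simp [hφF, hz]
        · simp only [hφF, if_neg hz]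
          rw [norm_div]
          rw [show ‖((‖β j‖ : ℝ) : ℂ)‖ = ‖β j‖ from by
            rw [Complex.norm_real]; exact abs_norm _]
          rw [RCLike.norm_conj]
          exact div_self (norm_ne_zero_iff.mpr hz)
      have hwn : ‖w j i‖ = ‖(inner ℂ (a i) (f j) : ℂ)‖ := by
        simp only [hw]
        rw [← inner_conj_symm (a i) (f j), RCLike.norm_conj]
      simp only [hV]
      rw [norm_mul, norm_mul, hφAn, hφFn, one_mul, mul_one, hwn]
    constructor
    · rintro ⟨j, hj⟩
      refine ⟨j, ?_⟩
      rw [← hnorm j]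
      have h8 : ‖V j i‖ * ‖V j i‖ = 1 := by rw [← hnormsq _, hj]
      nlinarith [norm_nonneg (V j i)]
    · rintro ⟨j, hj⟩
      refine ⟨j, ?_⟩
      rw [hnormsq, hnorm j, hj, mul_one]
  have eNA : (Finset.univ.filter fun i => (inner ℂ (a i) ψ : ℂ) ≠ 0) = KD.SAf av := by
    ext i
    rw [KD.mem_SAf, Finset.mem_filter]
    simp only [hav, hα, norm_ne_zero_iff]
    exact ⟨fun h => h.2, fun h => ⟨mem_univ _, h⟩⟩
  have eNF : (Finset.univ.filter fun j => (inner ℂ (f j) ψ : ℂ) ≠ 0) = KD.SFf bv := by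
    ext j
    rw [KD.mem_SFf, Finset.mem_filter]
    simp only [hbv, hβ, norm_ne_zero_iff]
    exact ⟨fun h => h.2, fun h => ⟨mem_univ _, h⟩⟩
  have eP : (Finset.univ.filter fun i =>
        (∃ j, ‖(inner ℂ (a i) (f j) : ℂ)‖ = 1) ∧ (inner ℂ (a i) ψ : ℂ) ≠ 0)
      = Finset.univ.filter (fun i => KD.Par V i ∧ av i ≠ 0) := by
    ext i
    simp only [Finset.mem_filter, hParIff i, hav, hα, norm_ne_zero_iff]
  have eQ : (Finset.univ.filter fun i =>
        (∃ j, ‖(inner ℂ (a i) (f j) : ℂ)‖ = 1) ∧ (inner ℂ (a i) ψ : ℂ) = 0)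
      = Finset.univ.filter (fun i => KD.Par V i ∧ av i = 0) := by
    ext i
    simp only [Finset.mem_filter, hParIff i, hav, hα, norm_eq_zero]
  rw [hNA, hNF, hnpar, hnbarpar, eNA, eNF, eP, eQ]
  omega
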